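/- Let D be a C*-algebra (which is in particular a complex algebra), N ≥ 1, and let S_{ij} ∈ D (1 ≤ i,j ≤ N) satisfy the defining relations of the quantum Cuntz–Krieger algebra FO(K(M_N(ℂ),tr)) of the complete quantum graph on M_N(ℂ): Σ_{k,l} S_{ik} S_{lk}^* S_{lj} = S_{ij} and Σ_r S_{ri}^* S_{rj} = δ_{ij} · N · Σ_{r,s} S_{rs} S_{rs}^* for all i, j. Let U ∈ M_N(ℂ) be a unitary matrix and λ ∈ ℂ with |λ| = 1, and define T_{ij} := λ · Σ_{p,q} U_{ip} \overline{U_{jq}} · S_{pq}, i.e. T = λ·U S U^*. Then the elements T_{ij} again satisfy both relations: Σ_{k,l} T_{ik} T_{lk}^* T_{lj} = T_{ij} and Σ_r T_{ri}^* T_{rj} = δ_{ij} · N · Σ_{r,s} T_{rs} T_{rs}^*. -/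

import Mathlib

set_option synthInstance.maxHeartbeats 1000000
set_option maxHeartbeats 1000000

open Unitization Matrix

set_option linter.unusedSectionVars false

section aux

variable {D : Type*} [NonUnitalRing D] [Module ℂ D] [IsScalarTower ℂ D D]
  [SMulCommClass ℂ D D] [StarRing D] [StarModule ℂ D] {N : ℕ}

local notation "D₁" => Unitization ℂ D

lemma my_inr_sum {α : Type*} (s : Finset α) (f : α → D) :
    ((∑ i ∈ s, f i : D) : D₁) = ∑ i ∈ s, (f i : D₁) :=
  map_sum (Unitization.inrHom (S := ℂ) (R := ℂ) (A := D)) f s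

/-- matrix of inr's -/
def mOf (A : Fin N → Fin N → D) : Matrix (Fin N) (Fin N) D₁ :=
  Matrix.of fun i j => (A i j : D₁)

lemma mOf_apply (A : Fin N → Fin N → D) (i j : Fin N) : mOf A i j = (A i j : D₁) := rfl

lemma entryAAstarA (A : Fin N → Fin N → D) (i j : Fin N) :
    (mOf A * (mOf A)ᴴ * mOf A) i j
      = ((∑ k, ∑ l, A i k * star (A l k) * A l j : D) : D₁) := by
  simp only [Matrix.mul_apply, Matrix.conjTranspose_apply, mOf_apply, Finset.sum_mul,
    ← Unitization.inr_star, ← Unitization.inr_mul, my_inr_sum]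
  exact Finset.sum_comm

lemma entryAstarA (A : Fin N → Fin N → D) (i j : Fin N) :
    ((mOf A)ᴴ * mOf A) i j = ((∑ r, star (A r i) * A r j : D) : D₁) := by
  simp only [Matrix.mul_apply, Matrix.conjTranspose_apply, mOf_apply,
    ← Unitization.inr_star, ← Unitization.inr_mul, my_inr_sum]

lemma traceAAstar (A : Fin N → Fin N → D) :
    (mOf A * (mOf A)ᴴ).trace = ((∑ r, ∑ s, A r s * star (A r s) : D) : D₁) := by
  simp only [Matrix.trace, Matrix.diag, Matrix.mul_apply, Matrix.conjTranspose_apply,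
    mOf_apply, ← Unitization.inr_star, ← Unitization.inr_mul, my_inr_sum]

instance : IsScalarTower ℂ (Unitization ℂ D) (Unitization ℂ D) := ⟨fun c u v => Unitization.ext
  (by simp [Unitization.fst_mul, smul_eq_mul, mul_assoc])
  (by simp [Unitization.snd_mul, smul_add, smul_smul, smul_mul_assoc, mul_comm, smul_comm])⟩

instance : SMulCommClass ℂ (Unitization ℂ D) (Unitization ℂ D) := ⟨fun c u v => Unitization.ext
  (by simp [Unitization.fst_mul, smul_eq_mul, mul_left_comm, mul_comm])
  (by simp [Unitization.snd_mul, smul_add, smul_smul, mul_smul_comm, mul_comm, smul_comm])⟩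

end aux

theorem statement_12 (D : Type*) [NonUnitalNormedRing D] [StarRing D] [CStarRing D]
    [CompleteSpace D] [NormedSpace ℂ D] [IsScalarTower ℂ D D] [SMulCommClass ℂ D D]
    [StarModule ℂ D]
    (N : ℕ) (hN : 1 ≤ N)
    -- generators of FO(K(M_N(ℂ), tr)): relations of the complete quantum graph on M_N(ℂ)
    (S : Fin N → Fin N → D)
    (h1 : ∀ i j, ∑ k, ∑ l, S i k * star (S l k) * S l j = S i j)
    (h2 : ∀ i j, ∑ r, star (S r i) * S r j
      = if i = j then (N : ℂ) • ∑ r, ∑ s, S r s * star (S r s) else 0)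
    -- a unitary U ∈ M_N(ℂ) and λ ∈ U(1)
    (U : Matrix (Fin N) (Fin N) ℂ) (hU : U ∈ Matrix.unitaryGroup (Fin N) ℂ)
    (lam : ℂ) (hlam : ‖lam‖ = 1)
    -- T = λ U S U^*
    (T : Fin N → Fin N → D)
    (hT : ∀ i j, T i j = ∑ p, ∑ q, (lam * U i p * (starRingEnd ℂ) (U j q)) • S p q) :
    (∀ i j, ∑ k, ∑ l, T i k * star (T l k) * T l j = T i j) ∧
    (∀ i j, ∑ r, star (T r i) * T r j
      = if i = j then (N : ℂ) • ∑ r, ∑ s, T r s * star (T r s) else 0) := by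
  have hl : (starRingEnd ℂ) lam * lam = 1 := by
    rw [mul_comm, Complex.mul_conj]
    norm_cast
    rw [Complex.normSq_eq_norm_sq, hlam]; norm_num
  -- matrices over the unitization
  set Sm : Matrix (Fin N) (Fin N) (Unitization ℂ D) := mOf S with hSm
  set Tm : Matrix (Fin N) (Fin N) (Unitization ℂ D) := mOf T with hTm
  set Um : Matrix (Fin N) (Fin N) (Unitization ℂ D) := U.map (algebraMap ℂ (Unitization ℂ D)) with hUm
  -- unitarity
  have hUstar : Umᴴ = (star U).map (algebraMap ℂ (Unitization ℂ D)) := by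
    refine Matrix.ext fun i j => ?_
    rw [hUm, Matrix.conjTranspose_apply, Matrix.map_apply, Matrix.map_apply, Matrix.star_apply]
    exact (algebraMap_star_comm _).symm
  have hU1 : Umᴴ * Um = 1 := by
    rw [hUstar, hUm, ← Matrix.map_mul, hU.1, Matrix.map_one] <;> simp
  have hU2 : Um * Umᴴ = 1 := by
    rw [hUstar, hUm, ← Matrix.map_mul, hU.2, Matrix.map_one] <;> simp
  have cancel1 : ∀ X : Matrix (Fin N) (Fin N) (Unitization ℂ D), Umᴴ * (Um * X) = X := fun X => by
    rw [← mul_assoc, hU1, one_mul]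
  have cancel2 : ∀ X : Matrix (Fin N) (Fin N) (Unitization ℂ D), Um * (Umᴴ * X) = X := fun X => by
    rw [← mul_assoc, hU2, one_mul]
  -- T as matrix conjugation
  have hTmat : Tm = lam • (Um * Sm * Umᴴ) := by
    refine Matrix.ext fun i j => ?_
    rw [hTm, mOf_apply, hT, my_inr_sum]
    simp only [Matrix.smul_apply, Matrix.mul_apply, Matrix.conjTranspose_apply, hUm,
      Matrix.map_apply, hSm, mOf_apply, Finset.sum_mul, Finset.smul_sum]
    rw [Finset.sum_comm]
    refine Finset.sum_congr rfl fun p _ => ?_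
    rw [my_inr_sum]
    refine Finset.sum_congr rfl fun q _ => ?_
    rw [Unitization.algebraMap_eq_inl, ← Unitization.inl_star, Unitization.inl_mul_inr,
      Unitization.inr_mul_inl, ← Unitization.inr_smul]
    congr 1
    rw [smul_smul, smul_smul]
    congr 1
    simp only [Complex.star_def]
    ring
  have hTstarmat : Tmᴴ = (starRingEnd ℂ) lam • (Um * Smᴴ * Umᴴ) := by
    rw [hTmat, Matrix.conjTranspose_smul, Matrix.conjTranspose_mul, Matrix.conjTranspose_mul,
      Matrix.conjTranspose_conjTranspose, mul_assoc]
    rfl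
  -- the relations for S, as matrix identities
  have h1m : Sm * Smᴴ * Sm = Sm := by
    refine Matrix.ext fun i j => ?_
    rw [hSm, entryAAstarA, h1, mOf_apply]
  set x : D := (N : ℂ) • ∑ r, ∑ s, S r s * star (S r s) with hx
  have h2m : Smᴴ * Sm = Matrix.diagonal (fun _ => (x : (Unitization ℂ D))) := by
    refine Matrix.ext fun i j => ?_
    rw [hSm, entryAstarA, h2, Matrix.diagonal_apply]
    split_ifs
    · rfl
    · exact Unitization.inr_zero ℂ
  have hcomm : Um * Matrix.diagonal (fun _ => (x : (Unitization ℂ D)))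
      = Matrix.diagonal (fun _ => (x : (Unitization ℂ D))) * Um := by
    refine Matrix.ext fun i j => ?_
    rw [Matrix.mul_diagonal, Matrix.diagonal_mul, hUm, Matrix.map_apply]
    exact Algebra.commutes _ _
  -- first relation for T
  have key1 : Tm * Tmᴴ * Tm = Tm := by
    rw [hTstarmat, hTmat]
    simp only [Matrix.smul_mul, Matrix.mul_smul, smul_smul]
    rw [hl, mul_one]
    congr 1
    calc Um * Sm * Umᴴ * (Um * Smᴴ * Umᴴ) * (Um * Sm * Umᴴ)
        = Um * (Sm * (Smᴴ * (Sm * Umᴴ))) := by simp only [mul_assoc, cancel1]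
      _ = Um * (Sm * Smᴴ * Sm * Umᴴ) := by simp only [mul_assoc]
      _ = Um * (Sm * Umᴴ) := by rw [h1m]
      _ = Um * Sm * Umᴴ := by rw [mul_assoc]
  -- second relation for T
  have key2 : Tmᴴ * Tm = Matrix.diagonal (fun _ => (x : Unitization ℂ D)) := by
    rw [hTstarmat, hTmat]
    simp only [Matrix.smul_mul, Matrix.mul_smul, smul_smul]
    rw [mul_comm lam ((starRingEnd ℂ) lam), hl, one_smul]
    calc Um * Smᴴ * Umᴴ * (Um * Sm * Umᴴ)
        = Um * (Smᴴ * (Sm * Umᴴ)) := by simp only [mul_assoc, cancel1]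
      _ = Um * (Smᴴ * Sm) * Umᴴ := by simp only [mul_assoc]
      _ = Um * Matrix.diagonal (fun _ => (x : Unitization ℂ D)) * Umᴴ := by rw [h2m]
      _ = Matrix.diagonal (fun _ => (x : Unitization ℂ D)) * (Um * Umᴴ) := by
            rw [hcomm, mul_assoc]
      _ = Matrix.diagonal (fun _ => (x : Unitization ℂ D)) := by rw [hU2, mul_one]
  -- the traces agree
  have htr : (Tm * Tmᴴ).trace = (Sm * Smᴴ).trace := by
    rw [hTstarmat, hTmat]
    simp only [Matrix.smul_mul, Matrix.mul_smul, smul_smul]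
    rw [hl, one_smul]
    rw [show Um * Sm * Umᴴ * (Um * Smᴴ * Umᴴ) = Um * (Sm * (Smᴴ * Umᴴ)) from by
      simp only [mul_assoc, cancel1]]
    rw [show (Um * (Sm * (Smᴴ * Umᴴ))).trace = ((Sm * (Smᴴ * Umᴴ)) * Um).trace from by
      simp only [Matrix.trace, Matrix.diag, Matrix.mul_apply]
      rw [Finset.sum_comm]
      refine Finset.sum_congr rfl fun i _ => Finset.sum_congr rfl fun j _ => ?_
      rw [hUm, Matrix.map_apply]
      exact Algebra.commutes _ _]
    rw [show Sm * (Smᴴ * Umᴴ) * Um = Sm * Smᴴ from by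
      simp only [mul_assoc]; rw [hU1, mul_one]]
  have htrD : (∑ r, ∑ s, T r s * star (T r s) : D) = ∑ r, ∑ s, S r s * star (S r s) := by
    apply Unitization.inr_injective (R := ℂ)
    rw [← traceAAstar, ← traceAAstar, ← hSm, ← hTm, htr]
  constructor
  · intro i j
    apply Unitization.inr_injective (R := ℂ)
    rw [← entryAAstarA, ← hTm, key1, hTm, mOf_apply]
  · intro i j
    apply Unitization.inr_injective (R := ℂ)
    rw [← entryAstarA, ← hTm, key2, Matrix.diagonal_apply, htrD, ← hx]
    split_ifs with h
    · rfl
    · exact (Unitization.inr_zero ℂ).symm
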